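/- For an integer m ≥ 2, define S(m) = Σ_{d=2}^{m} 2^{m−d} · Σ_{a=0}^{2^{d−1}} √((2(d−1) + 3/2)·2^{d−1} + a). Then the limit as m → ∞ of S(m) / (2^{3m/2}·√m) exists and equals (2+√2)/2. In particular, writing n = 2^m, S grows asymptotically like ((2+√2)/2)·n^{3/2}·√(log₂ n). -/

import Mathlib

open Filter Real Finset

noncomputable def Td (d : ℕ) : ℝ :=
  ∑ a ∈ Finset.range (2 ^ (d - 1) + 1),
    Real.sqrt ((2 * ((d : ℝ) - 1) + 3 / 2) * 2 ^ (d - 1) + (a : ℝ))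

noncomputable def dN (m : ℕ) : ℝ := (2:ℝ)^(3*(m:ℝ)/2) * Real.sqrt m

noncomputable def fF (m k : ℕ) : ℝ :=
  if k + 2 ≤ m then (2:ℝ)^k * Td (m-k) / dN m else 0

noncomputable def gG (k : ℕ) : ℝ := (1/2) * (Real.sqrt 2 / 2)^k

noncomputable def bB (k : ℕ) : ℝ :=
  2*Real.sqrt 3 * ((2:ℝ)^(-(3:ℝ)/2) * ((2:ℝ)^(-(1:ℝ)/2))^k)

lemma Td_lower (d : ℕ) :
    ((2:ℝ) ^ (d-1) + 1) * Real.sqrt ((2 * ((d : ℝ) - 1) + 3 / 2) * 2 ^ (d - 1)) ≤ Td d := by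
  have h := Finset.card_nsmul_le_sum (Finset.range (2 ^ (d - 1) + 1))
    (fun a => Real.sqrt ((2 * ((d : ℝ) - 1) + 3 / 2) * 2 ^ (d - 1) + (a : ℝ)))
    (Real.sqrt ((2 * ((d : ℝ) - 1) + 3 / 2) * 2 ^ (d - 1)))
    (fun a _ => Real.sqrt_le_sqrt (le_add_of_nonneg_right (by positivity)))
  simpa [Td, Finset.card_range, nsmul_eq_mul, mul_comm] using h

lemma Td_upper (d : ℕ) :
    Td d ≤ ((2:ℝ) ^ (d-1) + 1) * Real.sqrt ((2 * ((d : ℝ) - 1) + 5 / 2) * 2 ^ (d - 1)) := by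
  have h := Finset.sum_le_card_nsmul (Finset.range (2 ^ (d - 1) + 1))
    (fun a => Real.sqrt ((2 * ((d : ℝ) - 1) + 3 / 2) * 2 ^ (d - 1) + (a : ℝ)))
    (Real.sqrt ((2 * ((d : ℝ) - 1) + 5 / 2) * 2 ^ (d - 1)))
    (fun a ha => by
      apply Real.sqrt_le_sqrt
      have h1 : (a : ℝ) ≤ (2:ℝ) ^ (d-1) := by
        have h0 := Finset.mem_range.mp ha
        have : (a:ℝ) ≤ ((2 ^ (d-1) : ℕ) : ℝ) := by exact_mod_cast Nat.lt_succ_iff.mp h0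
        simpa using this
      nlinarith [h1])
  simpa [Td, Finset.card_range, nsmul_eq_mul, mul_comm] using h

lemma Td_nonneg (d : ℕ) : 0 ≤ Td d :=
  Finset.sum_nonneg fun _ _ => Real.sqrt_nonneg _

lemma main_eq (c : ℝ) (hc : 0 ≤ c) (m d : ℕ) (hd : 1 ≤ d) (hdm : d ≤ m) (hm : 1 ≤ m) :
    (2:ℝ)^(m-d) * (((2:ℝ)^(d-1)+1) * Real.sqrt (c * 2^(d-1)))
      / ((2:ℝ)^(3*(m:ℝ)/2) * Real.sqrt m)
    = (2:ℝ)^(-(((m-d:ℕ):ℝ)+3)/2) * (1 + ((2:ℝ)^(d-1))⁻¹) * Real.sqrt (c/(m:ℝ)) := by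
  have hA : ((m-d:ℕ):ℝ) = (m:ℝ) - d := by
    push_cast [Nat.cast_sub hdm]; ring
  have hB : ((d-1:ℕ):ℝ) = (d:ℝ) - 1 := by
    push_cast [Nat.cast_sub hd]; ring
  have hmpos : (0:ℝ) < m := by exact_mod_cast hm
  have hspos : 0 < Real.sqrt m := Real.sqrt_pos.mpr hmpos
  have hsq : Real.sqrt (c/(m:ℝ)) = Real.sqrt c / Real.sqrt m := Real.sqrt_div hc _
  have hp1 : ((2:ℝ)^(m-d) : ℝ) = (2:ℝ)^(((m-d:ℕ):ℝ)) := (Real.rpow_natCast 2 (m-d)).symm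
  have hp2 : ((2:ℝ)^(d-1) : ℝ) = (2:ℝ)^(((d-1:ℕ):ℝ)) := (Real.rpow_natCast 2 (d-1)).symm
  have hsplit : Real.sqrt (c * 2^(d-1)) = Real.sqrt c * (2:ℝ)^((((d-1:ℕ):ℝ))/2) := by
    rw [hp2, Real.sqrt_mul hc, Real.sqrt_eq_rpow ((2:ℝ)^(((d-1:ℕ):ℝ))), ← Real.rpow_mul (by norm_num)]
    norm_num
    left
    congr 1
    ring
  rw [hsq, hsplit, hp1, hp2, hA, hB,
    show (-(((m:ℝ) - ↑d) + 3) / 2) = (-3 + ((d:ℝ) - ↑m)) / 2 by ring]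
  have key : (2:ℝ)^((m:ℝ)-d) * ((2:ℝ)^((d:ℝ)-1) * (2:ℝ)^(((d:ℝ)-1)/2))
      = (2:ℝ)^((-3 + ((d:ℝ) - ↑m)) / 2) * (2:ℝ)^(3*(m:ℝ)/2) := by
    rw [← Real.rpow_add two_pos, ← Real.rpow_add two_pos, ← Real.rpow_add two_pos]
    congr 1; ring
  have e1 : (0:ℝ) < (2:ℝ)^((d:ℝ)-1) := Real.rpow_pos_of_pos two_pos _
  have e2 : (0:ℝ) < (2:ℝ)^(3*(m:ℝ)/2) := Real.rpow_pos_of_pos two_pos _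
  field_simp
  rw [show (m:ℝ) * 3 / 2 = 3 * (m:ℝ) / 2 by ring]
  linear_combination Real.sqrt c * key

lemma pow_split (k : ℕ) :
    (2:ℝ)^(-(((k:ℝ))+3)/2) = (2:ℝ)^(-(3:ℝ)/2) * ((2:ℝ)^(-(1:ℝ)/2))^k := by
  rw [← Real.rpow_natCast ((2:ℝ)^(-(1:ℝ)/2)) k, ← Real.rpow_mul (by norm_num),
    ← Real.rpow_add two_pos]
  congr 1; ring

lemma gk_eq (k : ℕ) :
    (2:ℝ)^(-(((k:ℝ))+3)/2) * Real.sqrt 2 = gG k := by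
  have h1 : Real.sqrt 2 / 2 = (2:ℝ)^(-(1:ℝ)/2) := by
    rw [Real.sqrt_eq_rpow, show (-(1:ℝ)/2) = 1/2 - 1 by ring, Real.rpow_sub two_pos,
      Real.rpow_one]
  unfold gG
  rw [h1, Real.sqrt_eq_rpow, ← Real.rpow_natCast ((2:ℝ)^(-(1:ℝ)/2)) k,
    ← Real.rpow_mul (by norm_num), ← Real.rpow_add two_pos,
    show ((1:ℝ)/2) = (2:ℝ)^(-(1:ℝ)) by rw [Real.rpow_neg_one]; norm_num,
    ← Real.rpow_add two_pos]
  congr 1; ring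
-- assume c.lean content; test limit lemmas standalone with placeholders
lemma lim_inv (k : ℕ) :
    Tendsto (fun m : ℕ => 1 + ((2:ℝ)^(m-k-1))⁻¹) atTop (nhds 1) := by
  have h0 : Tendsto (fun n : ℕ => ((2:ℝ)^n)⁻¹) atTop (nhds 0) := by
    simpa [one_div, inv_pow] using
      tendsto_pow_atTop_nhds_zero_of_lt_one (by norm_num : (0:ℝ) ≤ 1/2)
        (by norm_num : (1:ℝ)/2 < 1)
  have h2 : Tendsto (fun m : ℕ => ((2:ℝ)^(m-k-1))⁻¹) atTop (nhds 0) := by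
    simpa [Nat.sub_sub, Function.comp_def] using h0.comp (tendsto_sub_atTop_nat (k+1))
  simpa using tendsto_const_nhds.add h2

lemma lim_sqrt (k : ℕ) (δ : ℝ) :
    Tendsto (fun m : ℕ => Real.sqrt ((2*(((m-k:ℕ):ℝ)-1)+δ)/m)) atTop
      (nhds (Real.sqrt 2)) := by
  have h1 : Tendsto (fun m : ℕ => 2 - (2*(k:ℝ)+2-δ)*(1/m)) atTop (nhds 2) := by
    have h := tendsto_one_div_atTop_nhds_zero_nat.const_mul (2*(k:ℝ)+2-δ)
    simpa using tendsto_const_nhds.sub h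
  have h2 := h1.sqrt
  apply h2.congr'
  filter_upwards [eventually_ge_atTop (k+1)] with m hm
  have hk : ((m-k:ℕ):ℝ) = (m:ℝ) - k := by
    have : k ≤ m := by omega
    push_cast [Nat.cast_sub this]; ring
  have hm0 : (m:ℝ) ≠ 0 := by
    have : (1:ℕ) ≤ m := by omega
    positivity
  congr 1
  rw [hk]
  field_simp
  ring

lemma dN_pos {m : ℕ} (hm : 1 ≤ m) : 0 < dN m := by
  have hmpos : (0:ℝ) < m := by exact_mod_cast hm
  exact mul_pos (Real.rpow_pos_of_pos two_pos _) (Real.sqrt_pos.mpr hmpos)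

lemma key_eqs {m k : ℕ} (hm : k + 2 ≤ m) (δ : ℝ) (hδ : 0 ≤ δ) :
    (2:ℝ)^k * (((2:ℝ)^(m-k-1)+1) * Real.sqrt ((2*(((m-k:ℕ):ℝ)-1)+δ) * 2^(m-k-1))) / dN m
    = (2:ℝ)^(-(((k:ℝ))+3)/2) * (1 + ((2:ℝ)^(m-k-1))⁻¹)
        * Real.sqrt ((2*(((m-k:ℕ):ℝ)-1)+δ)/(m:ℝ)) := by
  have hd2 : 2 ≤ m - k := by omega
  have hc : 0 ≤ 2*(((m-k:ℕ):ℝ)-1)+δ := by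
    have : (2:ℝ) ≤ ((m-k:ℕ):ℝ) := by exact_mod_cast hd2
    linarith
  have h := main_eq (2*(((m-k:ℕ):ℝ)-1)+δ) hc m (m-k) (by omega) (by omega) (by omega)
  rw [Nat.sub_sub_self (by omega : k ≤ m)] at h
  simpa [dN] using h

lemma lim_k (k : ℕ) : Tendsto (fun m : ℕ => fF m k) atTop (nhds (gG k)) := by
  have lowT : Tendsto (fun m : ℕ => (2:ℝ)^(-(((k:ℝ))+3)/2) * (1 + ((2:ℝ)^(m-k-1))⁻¹)
      * Real.sqrt ((2*(((m-k:ℕ):ℝ)-1)+3/2)/(m:ℝ))) atTop (nhds (gG k)) := by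
    have h := ((tendsto_const_nhds (x := (2:ℝ)^(-(((k:ℝ))+3)/2))).mul (lim_inv k)).mul (lim_sqrt k (3/2))
    have h' : (2:ℝ)^(-(((k:ℝ))+3)/2) * 1 * Real.sqrt 2 = gG k := by rw [mul_one, gk_eq]
    rw [h'] at h
    exact h
  have highT : Tendsto (fun m : ℕ => (2:ℝ)^(-(((k:ℝ))+3)/2) * (1 + ((2:ℝ)^(m-k-1))⁻¹)
      * Real.sqrt ((2*(((m-k:ℕ):ℝ)-1)+5/2)/(m:ℝ))) atTop (nhds (gG k)) := by
    have h := ((tendsto_const_nhds (x := (2:ℝ)^(-(((k:ℝ))+3)/2))).mul (lim_inv k)).mul (lim_sqrt k (5/2))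
    have h' : (2:ℝ)^(-(((k:ℝ))+3)/2) * 1 * Real.sqrt 2 = gG k := by rw [mul_one, gk_eq]
    rw [h'] at h
    exact h
  refine tendsto_of_tendsto_of_tendsto_of_le_of_le' lowT highT ?_ ?_
  · filter_upwards [eventually_ge_atTop (k+2)] with m hm
    rw [← key_eqs hm (3/2) (by norm_num)]
    rw [fF, if_pos hm]
    have hD := dN_pos (show 1 ≤ m by omega)
    gcongr
    exact Td_lower (m-k)
  · filter_upwards [eventually_ge_atTop (k+2)] with m hm
    rw [← key_eqs hm (5/2) (by norm_num)]
    rw [fF, if_pos hm]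
    have hD := dN_pos (show 1 ≤ m by omega)
    gcongr
    exact Td_upper (m-k)

lemma fF_nonneg (m k : ℕ) : 0 ≤ fF m k := by
  unfold fF
  split
  · next h =>
    exact div_nonneg (mul_nonneg (by positivity) (Td_nonneg _)) (le_of_lt (dN_pos (by omega)))
  · exact le_refl 0

lemma fF_le_bound (m k : ℕ) : ‖fF m k‖ ≤ bB k := by
  rw [Real.norm_of_nonneg (fF_nonneg m k)]
  unfold fF
  split
  · next h =>
    have hd2 : 2 ≤ m - k := by omega
    have hm2 : (2:ℝ) ≤ (m:ℝ) := by exact_mod_cast (by omega : 2 ≤ m)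
    have step1 : (2:ℝ)^k * Td (m-k) / dN m
        ≤ (2:ℝ)^(-(((k:ℝ))+3)/2) * (1 + ((2:ℝ)^(m-k-1))⁻¹)
          * Real.sqrt ((2*(((m-k:ℕ):ℝ)-1)+5/2)/(m:ℝ)) := by
      rw [← key_eqs h (5/2) (by norm_num)]
      have hD := dN_pos (show 1 ≤ m by omega)
      gcongr
      exact Td_upper (m-k)
    have hinv : (1:ℝ) + ((2:ℝ)^(m-k-1))⁻¹ ≤ 2 := by
      have : (1:ℝ) ≤ (2:ℝ)^(m-k-1) := one_le_pow₀ (by norm_num)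
      have := inv_le_one_of_one_le₀ this
      linarith
    have hsq : Real.sqrt ((2*(((m-k:ℕ):ℝ)-1)+5/2)/(m:ℝ)) ≤ Real.sqrt 3 := by
      apply Real.sqrt_le_sqrt
      rw [div_le_iff₀ (by linarith)]
      have hle : ((m-k:ℕ):ℝ) ≤ (m:ℝ) := by exact_mod_cast Nat.sub_le m k
      linarith
    have hb : bB k = (2:ℝ)^(-(((k:ℝ))+3)/2) * (2 * Real.sqrt 3) := by
      unfold bB; rw [← pow_split]; ring
    rw [hb]
    calc (2:ℝ)^k * Td (m-k) / dN m
        ≤ (2:ℝ)^(-(((k:ℝ))+3)/2) * (1 + ((2:ℝ)^(m-k-1))⁻¹)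
          * Real.sqrt ((2*(((m-k:ℕ):ℝ)-1)+5/2)/(m:ℝ)) := step1
      _ ≤ (2:ℝ)^(-(((k:ℝ))+3)/2) * 2 * Real.sqrt 3 := by
          have hC : (0:ℝ) ≤ (2:ℝ)^(-(((k:ℝ))+3)/2) := le_of_lt (Real.rpow_pos_of_pos two_pos _)
          have h1 : (0:ℝ) ≤ 1 + ((2:ℝ)^(m-k-1))⁻¹ := by positivity
          calc (2:ℝ)^(-(((k:ℝ))+3)/2) * (1 + ((2:ℝ)^(m-k-1))⁻¹)
              * Real.sqrt ((2*(((m-k:ℕ):ℝ)-1)+5/2)/(m:ℝ))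
              ≤ (2:ℝ)^(-(((k:ℝ))+3)/2) * (1 + ((2:ℝ)^(m-k-1))⁻¹) * Real.sqrt 3 := by
                apply mul_le_mul_of_nonneg_left hsq (by positivity)
            _ ≤ (2:ℝ)^(-(((k:ℝ))+3)/2) * 2 * Real.sqrt 3 := by
                apply mul_le_mul_of_nonneg_right _ (Real.sqrt_nonneg 3)
                exact mul_le_mul_of_nonneg_left hinv hC
      _ = (2:ℝ)^(-(((k:ℝ))+3)/2) * (2 * Real.sqrt 3) := by ring
  · unfold bB; positivity

lemma bB_summable : Summable bB := by
  have hr0 : (0:ℝ) ≤ (2:ℝ)^(-(1:ℝ)/2) := le_of_lt (Real.rpow_pos_of_pos two_pos _)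
  have hr1 : (2:ℝ)^(-(1:ℝ)/2) < 1 :=
    Real.rpow_lt_one_of_one_lt_of_neg (by norm_num) (by norm_num)
  exact ((summable_geometric_of_lt_one hr0 hr1).mul_left _).mul_left _

lemma tsum_gG : ∑' k, gG k = (2 + Real.sqrt 2)/2 := by
  have h2 : Real.sqrt 2 ^ 2 = 2 := Real.sq_sqrt (by norm_num)
  have hs2 : Real.sqrt 2 < 2 := by nlinarith [Real.sqrt_nonneg 2]
  have hr0 : (0:ℝ) ≤ Real.sqrt 2 / 2 := by positivity
  have hr1 : Real.sqrt 2 / 2 < 1 := by linarith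
  unfold gG
  rw [tsum_mul_left, tsum_geometric_of_lt_one hr0 hr1]
  have hne : (1:ℝ) - Real.sqrt 2/2 ≠ 0 := by intro hh; nlinarith
  field_simp
  rw [div_eq_iff (show (2:ℝ) - Real.sqrt 2 ≠ 0 by nlinarith)]
  nlinarith [h2]

lemma seq_eq (m : ℕ) : (∑' k, fF m k) =
    (∑ d ∈ Finset.Icc 2 m, (2:ℝ)^(m-d) * Td d) / dN m := by
  rw [tsum_eq_sum (s := Finset.range (m-1))
    (by intro k hk; rw [fF, if_neg]; simp only [Finset.mem_range] at hk; omega)]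
  rw [Finset.sum_div]
  apply Finset.sum_nbij' (i := fun k => m - k) (j := fun d => m - d)
  · intro k hk; simp only [Finset.mem_range] at hk; simp only [Finset.mem_Icc]; omega
  · intro d hd; simp only [Finset.mem_Icc] at hd; simp only [Finset.mem_range]; omega
  · intro k hk; simp only [Finset.mem_range] at hk; omega
  · intro d hd; simp only [Finset.mem_Icc] at hd; omega
  · intro k hk
    simp only [Finset.mem_range] at hk
    rw [fF, if_pos (by omega), show m - (m - k) = k by omega]

/-- Asymptotics of the FFT divide/conquer-phase DMC sum: with
`S(m) = Σ_{d=2}^{m} 2^{m−d} · Σ_{a=0}^{2^{d−1}} √((2(d−1)+3/2)·2^{d−1} + a)`,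
the ratio `S(m) / (2^{3m/2}·√m)` tends to `(2+√2)/2` as `m → ∞`. -/
theorem fft_phase_dmc_asymptotic :
    Tendsto (fun m : ℕ =>
      (∑ d ∈ Finset.Icc 2 m, (2 : ℝ) ^ (m - d) *
          ∑ a ∈ Finset.range (2 ^ (d - 1) + 1),
            Real.sqrt ((2 * ((d : ℝ) - 1) + 3 / 2) * 2 ^ (d - 1) + (a : ℝ)))
        / ((2 : ℝ) ^ (3 * (m : ℝ) / 2) * Real.sqrt (m : ℝ)))
      atTop (nhds ((2 + Real.sqrt 2) / 2)) := by
  have hmain := tendsto_tsum_of_dominated_convergence (𝓕 := atTop)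
    bB_summable lim_k (Eventually.of_forall (fun m => fun k => fF_le_bound m k))
  rw [tsum_gG] at hmain
  apply hmain.congr
  intro m
  rw [seq_eq m]
  simp only [Td, dN]
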